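/- Let K be a real skew-symmetric n×n matrix. Then there exists a real symmetric n×n matrix Ξ such that the complex matrix Ξ + iK is Hermitian positive semidefinite and rank(Ξ + iK) = (1/2)·rank(K). (In particular, one may take Ξ to be the positive semidefinite square root of −K², i.e. if iK = U†DU is a spectral decomposition with U unitary and D real diagonal, then Ξ = U†|D|U works, and Ξ + iK = U†(|D| + D)U.) -/

import Mathlib

open Matrix
open scoped ComplexOrder

noncomputable section

/-- The complexification of a real matrix. -/
def toC {m n : ℕ} (M : Matrix (Fin m) (Fin n) ℝ) : Matrix (Fin m) (Fin n) ℂ :=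
  M.map Complex.ofReal

variable {n : ℕ}

lemma toC_conjTranspose (M : Matrix (Fin n) (Fin n) ℝ) : (toC M)ᴴ = toC Mᵀ := by
  ext i j; simp [toC, conjTranspose_apply, Complex.conj_ofReal]

lemma toC_neg (M : Matrix (Fin n) (Fin n) ℝ) : toC (-M) = -toC M := by
  ext i j; simp [toC]

lemma toC_mul (M N : Matrix (Fin n) (Fin n) ℝ) : toC (M * N) = toC M * toC N := by
  ext i j; simp [toC, mul_apply]

lemma abs_add_ne_zero_iff (x : ℝ) : |x| + x ≠ 0 ↔ 0 < x := by
  rcases le_or_gt x 0 with h | h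
  · simp [abs_of_nonpos h, not_lt, h]
  · have : 0 < |x| + x := by positivity
    simp [this.ne', h]

lemma abs_sub_ne_zero_iff (x : ℝ) : |x| - x ≠ 0 ↔ x < 0 := by
  rcases lt_or_ge x 0 with h | h
  · have : 0 < |x| - x := by rw [abs_of_neg h]; linarith
    simp [this.ne', h]
  · simp [abs_of_nonneg h, not_lt, h]

lemma rank_toC (M : Matrix (Fin n) (Fin n) ℝ) : (toC M).rank = M.rank := by
  rw [← rank_conjTranspose_mul_self (toC M), toC_conjTranspose, ← toC_mul,
    ← rank_transpose_mul_self M]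
  have hP : (Mᵀ * M).IsHermitian := by
    have := isHermitian_conjTranspose_mul_self M
    simpa using this
  set V : Matrix (Fin n) (Fin n) ℝ := (hP.eigenvectorUnitary : Matrix (Fin n) (Fin n) ℝ) with hV
  have hVW : V * star V = 1 := Matrix.mem_unitaryGroup_iff.mp hP.eigenvectorUnitary.2
  have hWV : star V * V = 1 := Matrix.mem_unitaryGroup_iff'.mp hP.eigenvectorUnitary.2
  have hdV : IsUnit V.det := isUnit_det_of_right_inverse hVW
  have hdW : IsUnit (star V).det := isUnit_det_of_right_inverse hWV
  have hdVC : IsUnit (toC V).det := by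
    rw [isUnit_iff_ne_zero]
    have : (toC V).det = Complex.ofReal V.det := ((Complex.ofRealHom).map_det V).symm
    rw [this]
    simpa using hdV.ne_zero
  have hdWC : IsUnit (toC (star V)).det := by
    rw [isUnit_iff_ne_zero]
    have : (toC (star V)).det = Complex.ofReal (star V).det :=
      ((Complex.ofRealHom).map_det (star V)).symm
    rw [this]
    simpa using hdW.ne_zero
  conv_lhs => rw [hP.spectral_theorem, Unitary.conjStarAlgAut_apply]
  conv_rhs => rw [hP.spectral_theorem, Unitary.conjStarAlgAut_apply]
  rw [toC_mul, toC_mul]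
  have hdiag : toC (diagonal (RCLike.ofReal ∘ hP.eigenvalues)) =
      diagonal (fun i => (hP.eigenvalues i : ℂ)) := by
    rw [toC, diagonal_map (by simp)]
    rfl
  rw [hdiag]
  rw [rank_mul_eq_left_of_isUnit_det _ _ hdWC, rank_mul_eq_right_of_isUnit_det _ _ hdVC,
    rank_mul_eq_left_of_isUnit_det _ _ hdW, rank_mul_eq_right_of_isUnit_det _ _ hdV,
    rank_diagonal, rank_diagonal]
  apply Fintype.card_congr
  apply Equiv.subtypeEquivRight
  intro i
  simp

/-- For a real skew-symmetric `K`, there is a real symmetric `Ξ` such that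
`Ξ + iK` is Hermitian positive semidefinite with rank equal to half the rank of `K`. -/
theorem exists_symm_add_smul_I_posSemidef_rank_half
    (n : ℕ) (K : Matrix (Fin n) (Fin n) ℝ) (hK : Kᵀ = -K) :
    ∃ Xi : Matrix (Fin n) (Fin n) ℝ, Xiᵀ = Xi ∧
      (toC Xi + Complex.I • toC K).PosSemidef ∧
      2 * (toC Xi + Complex.I • toC K).rank = K.rank := by
  classical
  set A : Matrix (Fin n) (Fin n) ℂ := Complex.I • toC K with hAdef
  have hKC : (toC K)ᴴ = -toC K := by rw [toC_conjTranspose, hK, toC_neg]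
  have hA : A.IsHermitian := by
    show Aᴴ = A
    rw [hAdef, conjTranspose_smul, hKC]
    simp [Complex.star_def, Complex.conj_I]
  set U : Matrix (Fin n) (Fin n) ℂ := (hA.eigenvectorUnitary : Matrix (Fin n) (Fin n) ℂ) with hU
  set d : Fin n → ℝ := hA.eigenvalues with hd
  have hUU : U * star U = 1 := Matrix.mem_unitaryGroup_iff.mp hA.eigenvectorUnitary.2
  have hUU' : star U * U = 1 := Matrix.mem_unitaryGroup_iff'.mp hA.eigenvectorUnitary.2
  have hdU : IsUnit U.det := isUnit_det_of_right_inverse hUU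
  have hdU' : IsUnit (star U).det := isUnit_det_of_right_inverse hUU'
  have hspec : A = U * diagonal (fun i => (d i : ℂ)) * star U := hA.spectral_theorem
  -- product of two conjugated diagonals
  have hprod : ∀ f g : Fin n → ℂ,
      (U * diagonal f * star U) * (U * diagonal g * star U) =
        U * diagonal (fun i => f i * g i) * star U := by
    intro f g
    calc (U * diagonal f * star U) * (U * diagonal g * star U)
        = U * diagonal f * (star U * U) * diagonal g * star U := by
          simp only [Matrix.mul_assoc]
      _ = U * (diagonal f * diagonal g) * star U := by
          rw [hUU']; simp only [Matrix.mul_assoc, Matrix.one_mul]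
      _ = U * diagonal (fun i => f i * g i) * star U := by
          rw [diagonal_mul_diagonal]
  set S : Matrix (Fin n) (Fin n) ℂ := U * diagonal (fun i => ((|d i| : ℝ) : ℂ)) * star U
    with hSdef
  have hS : S.PosSemidef := by
    rw [hSdef, Matrix.star_eq_conjTranspose]
    exact PosSemidef.mul_mul_conjTranspose_same
      (PosSemidef.diagonal (fun i => by simp [abs_nonneg])) U
  have hA2 : A * A = -toC (K * K) := by
    rw [hAdef, smul_mul_smul_comm, Complex.I_mul_I, toC_mul, neg_smul, one_smul]
  have hA2T : (A * A)ᵀ = A * A := by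
    rw [hA2, transpose_neg]
    have : (toC (K * K))ᵀ = toC ((K * K)ᵀ) := rfl
    rw [this, transpose_mul, hK, neg_mul_neg]
  have hSS : S * S = A * A := by
    conv_rhs => rw [hspec]
    rw [hSdef, hprod, hprod]
    have : (fun i => ((|d i| : ℝ) : ℂ) * ((|d i| : ℝ) : ℂ)) =
        (fun i => ((d i : ℝ) : ℂ) * ((d i : ℝ) : ℂ)) := by
      funext i
      rw [← Complex.ofReal_mul, ← Complex.ofReal_mul, abs_mul_abs_self]
    rw [this]
  have hSt : Sᵀ = S := by
    open scoped MatrixOrder in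
    refine (CFC.sq_eq_sq_iff _ _ (Matrix.nonneg_iff_posSemidef.mpr hS.transpose)
      (Matrix.nonneg_iff_posSemidef.mpr hS)).mp ?_
    rw [pow_two, pow_two, ← transpose_mul, hSS, hA2T, ← hSS]
  have hSH : Sᴴ = S := hS.1
  have hconj : ∀ i j, star (S i j) = S i j := by
    intro i j
    calc star (S i j) = Sᴴ j i := (conjTranspose_apply S i j).symm
      _ = S j i := by rw [hSH]
      _ = Sᵀ i j := rfl
      _ = S i j := by rw [hSt]
  set Xi : Matrix (Fin n) (Fin n) ℝ := of (fun i j => (S i j).re) with hXidef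
  have hSt' : ∀ i j, S j i = S i j := fun i j => congrFun (congrFun hSt i) j
  have hXiT : Xiᵀ = Xi := by
    ext i j
    show (S j i).re = (S i j).re
    rw [hSt']
  have hXiC : toC Xi = S := by
    ext i j
    refine Complex.ext ?_ ?_
    · simp [toC, hXidef]
    · have him : (S i j).im = 0 := by
        have := hconj i j
        rw [Complex.star_def, Complex.conj_eq_iff_im] at this
        exact this
      simp [toC, hXidef, him]
  have hM : toC Xi + A = U * diagonal (fun i => ((|d i| + d i : ℝ) : ℂ)) * star U := by
    rw [hXiC]
    conv_lhs => rw [hspec, hSdef]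
    rw [← Matrix.add_mul, ← Matrix.mul_add, diagonal_add]
    congr 2
    funext i
    push_cast
    ring
  have hMT : (toC Xi + A)ᵀ = U * diagonal (fun i => ((|d i| - d i : ℝ) : ℂ)) * star U := by
    have hAT : Aᵀ = -A := by
      rw [hAdef, transpose_smul]
      have : (toC K)ᵀ = toC Kᵀ := rfl
      rw [this, hK, toC_neg, smul_neg]
    have hsub : U * diagonal (fun i => ((|d i| - d i : ℝ) : ℂ)) * star U = S - A := by
      have hdd : (fun i => ((|d i| - d i : ℝ) : ℂ)) =
          (fun i => ((|d i| : ℝ) : ℂ) - ((d i : ℝ) : ℂ)) := by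
        funext i
        push_cast
        ring
      rw [hdd, ← diagonal_sub, Matrix.mul_sub, Matrix.sub_mul, ← hSdef, ← hspec]
    rw [transpose_add, hAT]
    have : (toC Xi)ᵀ = toC Xiᵀ := rfl
    rw [this, hXiT, hXiC, hsub, sub_eq_add_neg]
  have hPSD : (toC Xi + A).PosSemidef := by
    rw [hM, Matrix.star_eq_conjTranspose]
    refine PosSemidef.mul_mul_conjTranspose_same (PosSemidef.diagonal fun i => ?_) U
    simp only [Pi.zero_apply]
    rw [Complex.zero_le_real]
    have := neg_abs_le (d i)
    linarith
  have hMrank : (toC Xi + A).rank = Fintype.card {i // 0 < d i} := by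
    rw [hM, rank_mul_eq_left_of_isUnit_det _ _ hdU', rank_mul_eq_right_of_isUnit_det _ _ hdU,
      rank_diagonal]
    apply Fintype.card_congr
    apply Equiv.subtypeEquivRight
    intro i
    simp only [ne_eq, Complex.ofReal_eq_zero]
    exact abs_add_ne_zero_iff _
  have hMTrank : (toC Xi + A).rank = Fintype.card {i // d i < 0} := by
    rw [← rank_transpose (toC Xi + A), hMT,
      rank_mul_eq_left_of_isUnit_det _ _ hdU', rank_mul_eq_right_of_isUnit_det _ _ hdU,
      rank_diagonal]
    apply Fintype.card_congr
    apply Equiv.subtypeEquivRight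
    intro i
    simp only [ne_eq, Complex.ofReal_eq_zero]
    exact abs_sub_ne_zero_iff _
  have hArank : A.rank = Fintype.card {i // d i ≠ 0} := hA.rank_eq_card_non_zero_eigs
  have hAK : A.rank = K.rank := by
    have h1 : A = (Complex.I • (1 : Matrix (Fin n) (Fin n) ℂ)) * toC K := by
      rw [smul_mul_assoc, Matrix.one_mul]
    have h2 : IsUnit (Complex.I • (1 : Matrix (Fin n) (Fin n) ℂ)).det := by
      rw [Matrix.det_smul, Matrix.det_one, mul_one, isUnit_iff_ne_zero]
      exact pow_ne_zero _ Complex.I_ne_zero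
    rw [h1, rank_mul_eq_right_of_isUnit_det _ _ h2, rank_toC]
  have hcard : Fintype.card {i // 0 < d i} + Fintype.card {i // d i < 0}
      = Fintype.card {i // d i ≠ 0} := by
    simp only [Fintype.card_subtype]
    rw [← Finset.card_union_of_disjoint]
    · congr 1
      rw [← Finset.filter_or]
      apply Finset.filter_congr
      intro i _
      simp only [eq_iff_iff, ne_eq]
      constructor
      · rintro (h | h)
        · exact h.ne'
        · exact h.ne
      · intro h
        rcases lt_or_gt_of_ne h with h' | h'
        · exact Or.inr h'
        · exact Or.inl h'
    · rw [Finset.disjoint_filter]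
      intro i _ hp
      exact not_lt.mpr hp.le
  refine ⟨Xi, hXiT, hPSD, ?_⟩
  rw [two_mul]
  nth_rewrite 1 [hMrank]
  rw [hMTrank, hcard, ← hArank, hAK]
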